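/- arXiv:math/9610219 — 4 statements merged into one kernel-verified Lean document; each statement's English description precedes it below -/
import Mathlib

section
/- Let U ⊆ ℝ be a nonempty open set and let A ⊆ ℝ be a set that is both meager and Lebesgue null. Then there exist pairwise disjoint sets D_k ⊆ U and real numbers x_k (for k ∈ ℕ) such that ⋃_{k∈ℕ} D_k is nowhere dense and A ⊆ ⋃_{k∈ℕ} (D_k + x_k). -/
set_option maxHeartbeats 1000000

open Set MeasureTheory ENNReal NNReal

lemma cover_null {S : Set ℝ} (hS : volume S = 0) {ε : ℝ} (hε : 0 < ε) :
    ∃ p q : ℕ → ℝ, S ⊆ ⋃ m, Ioc (p m) (q m) ∧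
      Summable (fun m => max (q m - p m) 0) ∧ ∑' m, max (q m - p m) 0 ≤ ε := by
  have h1 : StieltjesFunction.id.measure S = 0 := by
    rw [← Real.volume_eq_stieltjes_id]; exact hS
  have h2 : StieltjesFunction.id.outer S = 0 := by
    rw [StieltjesFunction.measure] at h1; exact h1
  have hε2 : (0 : ℝ≥0∞) < ENNReal.ofReal (ε / 2) := by
    simpa using ENNReal.ofReal_pos.2 (by linarith)
  have h3 : StieltjesFunction.id.outer S < ENNReal.ofReal (ε / 2) := by
    rw [h2]; exact hε2
  rw [StieltjesFunction.outer, OuterMeasure.ofFunction_apply, iInf_lt_iff] at h3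
  obtain ⟨t, ht⟩ := h3
  rw [iInf_lt_iff] at ht
  obtain ⟨hsub, hsum⟩ := ht
  obtain ⟨δ, hδpos, hδsum⟩ := ENNReal.exists_pos_sum_of_countable (ne_of_gt hε2) ℕ
  have key : ∀ m, ∃ pqm : ℝ × ℝ, t m ⊆ Ioc pqm.1 pqm.2 ∧
      ENNReal.ofReal (pqm.2 - pqm.1) < StieltjesFunction.id.length (t m) + δ m := by
    intro m
    have hne : StieltjesFunction.id.length (t m) ≠ ⊤ := by
      refine ne_top_of_le_ne_top (ne_of_lt (lt_of_lt_of_le hsum le_top)) ?_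
      exact ENNReal.le_tsum m
    have hlt : StieltjesFunction.id.length (t m)
        < StieltjesFunction.id.length (t m) + δ m :=
      ENNReal.lt_add_right hne (by simpa using (hδpos m).ne')
    conv_lhs at hlt => rw [StieltjesFunction.length]
    rw [if_neg (not_isEmpty_of_nonempty ℝ), iInf_lt_iff] at hlt
    obtain ⟨p, hp⟩ := hlt
    rw [iInf_lt_iff] at hp
    obtain ⟨q, hq⟩ := hp
    rw [iInf_lt_iff] at hq
    obtain ⟨hss, hval⟩ := hq
    exact ⟨(p, q), fun y hy => hss ⟨hy, fun hb => not_isBot y hb⟩, by simpa using hval⟩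
  choose pq hpq hval using key
  have hcover : S ⊆ ⋃ m, Ioc (pq m).1 (pq m).2 :=
    hsub.trans (Set.iUnion_mono fun m => hpq m)
  set v : ℕ → ℝ≥0 := fun m => Real.toNNReal ((pq m).2 - (pq m).1) with hv
  have hsum2 : ∑' m, (v m : ℝ≥0∞) ≤ ENNReal.ofReal ε := by
    have h4 : ∑' m, (v m : ℝ≥0∞) ≤ ∑' m, (StieltjesFunction.id.length (t m) + δ m) :=
      ENNReal.tsum_le_tsum fun m => le_of_lt (hval m)
    rw [ENNReal.tsum_add] at h4
    refine h4.trans ?_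
    calc ∑' m, StieltjesFunction.id.length (t m) + ∑' m, (δ m : ℝ≥0∞)
        ≤ ENNReal.ofReal (ε / 2) + ENNReal.ofReal (ε / 2) := add_le_add hsum.le hδsum.le
      _ = ENNReal.ofReal ε := by
          rw [← ENNReal.ofReal_add (by linarith) (by linarith)]; norm_num
  have hfin : ∑' m, (v m : ℝ≥0∞) ≠ ⊤ := ne_top_of_le_ne_top ENNReal.ofReal_ne_top hsum2
  have hsummable : Summable v := ENNReal.tsum_coe_ne_top_iff_summable.mp hfin
  have hcoe : (fun m => max ((pq m).2 - (pq m).1) 0) = fun m => ((v m : ℝ)) := by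
    funext m; rw [hv]; simp [Real.coe_toNNReal']
  have hsummable' : Summable (fun m => max ((pq m).2 - (pq m).1) 0) := by
    rw [hcoe]; exact NNReal.summable_coe.2 hsummable
  have hbound : ∑' m, max ((pq m).2 - (pq m).1) 0 ≤ ε := by
    rw [hcoe]
    have hh1 : (∑' m, (v m : ℝ≥0∞)).toReal = ∑' m, (v m : ℝ) := by
      rw [ENNReal.tsum_toReal_eq (fun m => ENNReal.coe_ne_top)]; simp
    have hh2 := ENNReal.toReal_mono ENNReal.ofReal_ne_top hsum2
    rw [hh1, ENNReal.toReal_ofReal hε.le] at hh2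
    exact hh2
  exact ⟨fun m => (pq m).1, fun m => (pq m).2, hcover, hsummable', hbound⟩

lemma interior_union_empty {s t : Set ℝ} (hs : IsClosed s) (hsi : interior s = ∅)
    (hti : interior t = ∅) : interior (s ∪ t) = ∅ := by
  have h1 : interior (s ∪ t) ∩ sᶜ ⊆ interior t := by
    refine interior_maximal ?_ (isOpen_interior.inter hs.isOpen_compl)
    rintro x ⟨hx, hxs⟩
    rcases interior_subset hx with h | h
    · exact absurd h hxs
    · exact h
  have h2 : interior (s ∪ t) ⊆ s := by
    intro x hx
    by_contra hxs
    have := h1 ⟨hx, hxs⟩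
    rw [hti] at this
    exact this
  have h3 : interior (s ∪ t) ⊆ interior s := interior_maximal h2 isOpen_interior
  rw [hsi] at h3
  exact eq_empty_of_subset_empty h3

lemma biUnion_range_closed_int_empty (E : ℕ → Set ℝ) (hcl : ∀ i, IsClosed (E i))
    (hint : ∀ i, interior (E i) = ∅) (k : ℕ) :
    IsClosed (⋃ i ∈ Finset.range k, E i) ∧ interior (⋃ i ∈ Finset.range k, E i) = ∅ := by
  induction k with
  | zero => simp
  | succ k ih =>
    rw [Finset.range_add_one]
    simp only [Finset.set_biUnion_insert]
    refine ⟨(hcl k).union ih.1, ?_⟩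
    rw [Set.union_comm]
    exact interior_union_empty ih.1 ih.2 (hint k)

lemma translate_closed_int_empty {C : Set ℝ} (hC : IsClosed C) (hCi : interior C = ∅)
    (t : ℝ) : IsClosed ((fun y => y + t) '' C) ∧ interior ((fun y => y + t) '' C) = ∅ := by
  set h := Homeomorph.addRight t with hhdef
  have hc : ⇑h = fun y => y + t := by funext y; rw [hhdef, Homeomorph.coe_addRight]
  constructor
  · rw [← hc]; exact (h.isClosedMap) C hC
  · have h2 : ⇑h '' interior C = interior (⇑h '' C) := h.image_interior C
    rw [hc] at h2
    rw [← h2, hCi, Set.image_empty]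

/-- If `U ⊆ ℝ` is nonempty open and `A ⊆ ℝ` is both meager and Lebesgue null, then
there are pairwise disjoint sets `D k ⊆ U` and reals `x k` such that `⋃ k, D k` is
nowhere dense and `A ⊆ ⋃ k, (D k + x k)`. -/
theorem stmt15 (U : Set ℝ) (hU : IsOpen U) (hUne : U.Nonempty)
    (A : Set ℝ) (hA : IsMeagre A) (hnull : volume A = 0) :
    ∃ (D : ℕ → Set ℝ) (x : ℕ → ℝ),
      (Pairwise fun i j => Disjoint (D i) (D j)) ∧
      (∀ k, D k ⊆ U) ∧
      IsNowhereDense (⋃ k, D k) ∧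
      A ⊆ ⋃ k, (fun d => d + x k) '' D k := by
  -- an interval inside U
  obtain ⟨z, hz⟩ := hUne
  obtain ⟨r, hr, hball⟩ := Metric.isOpen_iff.mp hU z hz
  have hIU' : Ioo (z - r) (z + r) ⊆ U := by rw [← Real.ball_eq_Ioo]; exact hball
  obtain ⟨a₀, b₀, L, hL, hLb, hIU⟩ :
      ∃ a b Lv : ℝ, 0 < Lv ∧ a + Lv = b ∧ Ioo a b ⊆ U :=
    ⟨z - r, z + r, 2 * r, by linarith, by ring, hIU'⟩
  -- meager decomposition
  rw [isMeagre_iff_countable_union_isNowhereDense] at hA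
  obtain ⟨S, hSnwd, hScnt, hSsub⟩ := hA
  obtain ⟨f, hf⟩ := (hScnt.insert ∅).exists_eq_range (insert_nonempty _ _)
  set C : ℕ → Set ℝ := fun n => closure (f n) with hC
  have hfS : ∀ n, f n ∈ insert ∅ S := by
    intro n; rw [hf]; exact mem_range_self n
  have hCcl : ∀ n, IsClosed (C n) := fun n => isClosed_closure
  have hCint : ∀ n, interior (C n) = ∅ := by
    intro n
    rcases hfS n with h | h
    · rw [hC]; simp [h]
    · exact hSnwd _ h
  have hAC : A ⊆ ⋃ n, C n := by
    intro zz hzz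
    obtain ⟨s, hsS, hzs⟩ := hSsub hzz
    have : s ∈ insert ∅ S := mem_insert_of_mem _ hsS
    rw [hf] at this
    obtain ⟨n, rfl⟩ := this
    exact mem_iUnion.mpr ⟨n, subset_closure hzs⟩
  -- covers of A ∩ C n by intervals
  have hnulln : ∀ n, volume (A ∩ C n) = 0 :=
    fun n => measure_mono_null inter_subset_left hnull
  have hεn : ∀ n : ℕ, (0:ℝ) < L/8 * (1/2)^n := by
    intro n; positivity
  choose p q hcov hsml hbnd using fun n => cover_null (hnulln n) (hεn n)
  set u : ℕ → ℕ → ℝ := fun n m => max (q n m - p n m) 0 with hu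
  have hu0 : ∀ n m, 0 ≤ u n m := fun n m => le_max_right _ _
  -- summability over pairs
  set w : ℕ × ℕ → ℝ := fun nm => u nm.1 nm.2 with hw
  have hgeom : Summable (fun n : ℕ => L/8 * (1/2)^n) :=
    (summable_geometric_two).mul_left _
  have hsumrow : Summable (fun n => ∑' m, u n m) := by
    refine Summable.of_nonneg_of_le (fun n => tsum_nonneg (fun m => hu0 n m))
      (fun n => hbnd n) hgeom
  have hwsum : Summable w := by
    rw [summable_prod_of_nonneg (fun nm => hu0 nm.1 nm.2)]
    exact ⟨fun n => hsml n, hsumrow⟩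
  have hwts : ∑' nm, w nm ≤ L/4 := by
    rw [Summable.tsum_prod' hwsum (fun n => hsml n)]
    calc ∑' n, ∑' m, u n m ≤ ∑' n : ℕ, L/8 * (1/2)^n :=
          Summable.tsum_le_tsum (fun n => hbnd n) hsumrow hgeom
      _ = L/8 * 2 := by rw [_root_.tsum_mul_left, tsum_geometric_two]
      _ = L/4 := by ring
  -- index bookkeeping
  set e : ℕ ≃ ℕ × ℕ := (Denumerable.eqv (ℕ × ℕ)).symm with he
  set ℓ : ℕ → ℝ := fun i => w (e i) with hℓ
  have hℓ0 : ∀ i, 0 ≤ ℓ i := fun i => hu0 _ _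
  have hℓsum : Summable ℓ := e.summable_iff.mpr hwsum
  have hℓts : ∑' i, ℓ i ≤ L/4 := by
    rw [hℓ]; rw [e.tsum_eq w]; exact hwts
  set g : ℕ → ℝ := fun i => L/8 * (1/2)^i with hg
  have hg0 : ∀ i, 0 < g i := fun i => hεn i
  have hgsum : Summable g := hgeom
  have hgts : ∑' i, g i = L/4 := by
    rw [hg, _root_.tsum_mul_left, tsum_geometric_two]; ring
  -- positions
  set c : ℕ → ℝ := fun i => a₀ + L/4 + ∑ j ∈ Finset.range i, (ℓ j + g j) with hc'
  have hcmono : Monotone c := by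
    intro i j hij
    simp only [hc', add_le_add_iff_left]
    exact Finset.sum_le_sum_of_subset_of_nonneg
      (Finset.range_subset_range.mpr hij)
      (fun k _ _ => by have := hℓ0 k; have := (hg0 k).le; linarith)
  have hcsucc : ∀ i, c (i+1) = c i + ℓ i + g i := by
    intro i; simp only [hc', Finset.sum_range_succ]; ring
  have hcub : ∀ i, c i ≤ a₀ + 3*L/4 := by
    intro i
    have h1 : ∑ j ∈ Finset.range i, (ℓ j + g j) ≤ ∑' j, (ℓ j + g j) :=
      Summable.sum_le_tsum _ (fun k _ => by have := hℓ0 k; have := (hg0 k).le; linarith)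
        (hℓsum.add hgsum)
    have h2 : ∑' j, (ℓ j + g j) = ∑' j, ℓ j + ∑' j, g j := Summable.tsum_add hℓsum hgsum
    simp only [hc']
    rw [h2] at h1
    have := hℓts
    rw [hgts] at h1
    linarith
  have hclb : ∀ i, a₀ < c i := by
    intro i
    have h1 : (0:ℝ) ≤ ∑ j ∈ Finset.range i, (ℓ j + g j) :=
      Finset.sum_nonneg (fun k _ => by have := hℓ0 k; have := (hg0 k).le; linarith)
    simp only [hc']
    linarith
  have hℓq : ∀ i, q (e i).1 (e i).2 - p (e i).1 (e i).2 ≤ ℓ i :=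
    fun i => le_max_left _ _
  clear_value ℓ g c
  have hcend : ∀ i, c i + ℓ i < b₀ := by
    intro i
    have h1 : c i + ℓ i ≤ c (i+1) := by rw [hcsucc i]; have := (hg0 i).le; linarith
    have h2 := hcub (i+1)
    have h3 : a₀ + 3*L/4 < b₀ := by linarith
    linarith [h1, h2, h3]
  -- the sets
  set t : ℕ → ℝ := fun i => c i - p (e i).1 (e i).2 with ht
  set P : ℕ → Set ℝ :=
    fun i => A ∩ C (e i).1 ∩ Ioc (p (e i).1 (e i).2) (q (e i).1 (e i).2) with hP
  set D : ℕ → Set ℝ := fun i => (fun y => y + t i) '' P i with hD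
  have hDIoc : ∀ i, D i ⊆ Ioc (c i) (c i + ℓ i) := by
    intro i y hy
    obtain ⟨zz, hzz, rfl⟩ := hy
    obtain ⟨-, hzI⟩ := hzz
    have hq := hℓq i
    constructor
    · have := hzI.1; simp only [ht]; linarith
    · have := hzI.2; simp only [ht]; linarith
  refine ⟨D, fun i => p (e i).1 (e i).2 - c i, ?_, ?_, ?_, ?_⟩
  · -- pairwise disjoint
    have key : ∀ i j, i < j → Disjoint (D i) (D j) := by
      intro i j hij
      have h1 : c i + ℓ i ≤ c j := by
        have := hcsucc i
        have h2 := hcmono (Nat.succ_le_of_lt hij)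
        have := (hg0 i).le
        linarith
      refine Disjoint.mono ((hDIoc i).trans Ioc_subset_Iic_self)
        ((hDIoc j).trans Ioc_subset_Ioi_self) ?_
      exact Iic_disjoint_Ioi h1
    intro i j hij
    rcases hij.lt_or_gt with h | h
    · exact key i j h
    · exact (key j i h).symm
  · -- inside U
    intro k
    refine (hDIoc k).trans ?_
    refine subset_trans ?_ hIU
    intro y hy
    exact ⟨lt_of_lt_of_le (hclb k) hy.1.le, lt_of_le_of_lt hy.2 (hcend k)⟩
  · -- nowhere dense
    set E : ℕ → Set ℝ :=
      fun i => ((fun y => y + t i) '' C (e i).1) ∩ Icc (c i) (c i + ℓ i) with hE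
    have hEprop : ∀ i, IsClosed (E i) ∧ interior (E i) = ∅ := by
      intro i
      obtain ⟨h1, h2⟩ := translate_closed_int_empty (hCcl (e i).1) (hCint (e i).1) (t i)
      refine ⟨h1.inter isClosed_Icc, ?_⟩
      have : interior (E i) ⊆ interior ((fun y => y + t i) '' C (e i).1) :=
        interior_mono inter_subset_left
      rw [h2] at this
      exact eq_empty_of_subset_empty this
    have hclD : ∀ i, closure (D i) ⊆ E i := by
      intro i
      refine closure_minimal ?_ (hEprop i).1
      intro y hy
      refine ⟨?_, Ioc_subset_Icc_self (hDIoc i hy)⟩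
      obtain ⟨zz, hzz, rfl⟩ := hy
      exact mem_image_of_mem _ hzz.1.2
    rw [IsNowhereDense]
    by_contra hcon
    rw [← ne_eq, ← Set.nonempty_iff_ne_empty] at hcon
    obtain ⟨y0, hy0⟩ := hcon
    set N := ⋃ i, D i with hN
    -- bound
    have hbdd : BddAbove (range c) := by
      refine ⟨a₀ + 3*L/4, ?_⟩
      rintro _ ⟨i, rfl⟩
      exact hcub i
    set csup := ⨆ i, c i with hcsup
    have hNsub : N ⊆ Iic csup := by
      rintro y ⟨s, ⟨i, rfl⟩, hy⟩
      have h1 := (hDIoc i hy).2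
      have h2 : c i + ℓ i ≤ c (i+1) := by rw [hcsucc i]; have := (hg0 i).le; linarith
      have h3 : c (i+1) ≤ csup := le_ciSup hbdd (i+1)
      exact le_trans h1 (le_trans h2 h3)
    have hMsub : closure N ⊆ Iic csup := closure_minimal hNsub isClosed_Iic
    -- a point of interior strictly below csup
    obtain ⟨rr, hrr, hball2⟩ := Metric.isOpen_iff.mp isOpen_interior y0 hy0
    set y := y0 - rr/2 with hy
    have hyint : y ∈ interior (closure N) := by
      apply hball2
      rw [Metric.mem_ball, Real.dist_eq, hy]
      rw [abs_of_nonpos (by linarith)]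
      linarith
    have hycsup : y < csup := by
      have h1 : y0 ≤ csup := hMsub (interior_subset hy0)
      rw [hy]; linarith
    obtain ⟨i₀, hi₀⟩ := exists_lt_of_lt_ciSup hycsup
    -- finite union
    obtain ⟨hFcl, hFint⟩ := biUnion_range_closed_int_empty E
      (fun i => (hEprop i).1) (fun i => (hEprop i).2) i₀
    set F := ⋃ i ∈ Finset.range i₀, E i with hF
    have hNsplit : N ⊆ (⋃ i ∈ Finset.range i₀, D i) ∪ Ici (c i₀) := by
      rintro y' ⟨s, ⟨i, rfl⟩, hy'⟩
      by_cases hii : i < i₀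
      · left; exact mem_biUnion (Finset.mem_range.mpr hii) hy'
      · right
        have h1 : c i₀ ≤ c i := hcmono (Nat.le_of_not_lt hii)
        exact le_trans h1 (hDIoc i hy').1.le
    have hclosN : closure N ⊆ F ∪ Ici (c i₀) := by
      refine (closure_mono hNsplit).trans ?_
      rw [closure_union]
      refine union_subset_union ?_ ?_
      · rw [Finset.closure_biUnion]
        exact iUnion₂_mono fun i _ => hclD i
      · rw [IsClosed.closure_eq isClosed_Ici]
    have hWF : interior (closure N) ∩ Iio (c i₀) ⊆ F := by
      rintro y' ⟨h1, h2⟩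
      rcases hclosN (interior_subset h1) with h | h
      · exact h
      · exact absurd (mem_Iio.mp h2) (not_lt.mpr h)
    have hWopen : IsOpen (interior (closure N) ∩ Iio (c i₀)) :=
      isOpen_interior.inter isOpen_Iio
    have : y ∈ interior F := interior_maximal hWF hWopen ⟨hyint, hi₀⟩
    rw [hFint] at this
    exact this
  · -- coverage
    intro zz hzz
    obtain ⟨n, hn⟩ := mem_iUnion.mp (hAC hzz)
    obtain ⟨m, hm⟩ := mem_iUnion.mp (hcov n ⟨hzz, hn⟩)
    set i := e.symm (n, m) with hi
    have hei : e i = (n, m) := e.apply_symm_apply (n, m)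
    refine mem_iUnion.mpr ⟨i, ?_⟩
    refine ⟨zz + t i, ?_, ?_⟩
    · refine mem_image_of_mem _ ?_
      rw [hP]
      simp only [hei]
      exact ⟨⟨hzz, hn⟩, hm⟩
    · simp only []; ring
end

section
/- Let x ∈ X. The ideal I has property (M'_x) if and only if there exists a Borel measurable function f : X → X such that for each n ∈ ℕ with x ∈ U_n, the set H_n(f) contains a nonempty perfect subset of X. -/
open Set MeasureTheory

/-- `I` has property (M) relative to `E ⊆ X`: there is a Borel measurable function
`f : E → X` all of whose fibers (as subsets of `X`) are outside `I`. -/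
def MRel {X : Type*} [TopologicalSpace X] [MeasurableSpace X]
    (I : Set (Set X)) (E : Set X) : Prop :=
  ∃ f : ↥E → X, Measurable f ∧ ∀ x : X, (Subtype.val '' (f ⁻¹' {x})) ∉ I

/-- `I` has property (M'_x): it has property (M) relative to every open
neighborhood of `x`. -/
def MPrimeAt {X : Type*} [TopologicalSpace X] [MeasurableSpace X]
    (I : Set (Set X)) (x : X) : Prop :=
  ∀ U : Set X, IsOpen U → x ∈ U → MRel I U

/-- `H_n(f) = {y ∈ X : U n ∩ f⁻¹[{y}] ∉ I}`. -/
def Hset {X : Type*} (I : Set (Set X)) (U : ℕ → Set X) (f : X → X) (n : ℕ) : Set X :=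
  {y | U n ∩ f ⁻¹' {y} ∉ I}

section AuxStmt16

open Function Filter

lemma stmt16_uncountable_cantor : ¬ Countable (ℕ → Bool) := by
  intro h
  have h2 : Countable (Set ℕ) :=
    Countable.of_equiv (ℕ → Bool) (Equiv.arrowCongr (Equiv.refl ℕ) Equiv.propEquivBool.symm)
  obtain ⟨f, hf⟩ := (countable_iff_exists_surjective (α := Set ℕ)).mp h2
  exact Function.cantor_surjective f hf

lemma stmt16_dite_measurable {α β : Type*} [MeasurableSpace α] [MeasurableSpace β]
    {s : Set α} [∀ x : α, Decidable (x ∈ s)] (hs : MeasurableSet s)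
    {g : ↥s → β} (hg : Measurable g) (c : β) :
    Measurable fun z => if h : z ∈ s then g ⟨z, h⟩ else c :=
  Measurable.dite hg (g := fun _ => c) measurable_const hs

lemma stmt16_cantor_image_perfect {X : Type*} [TopologicalSpace X] [T2Space X]
    {F : (ℕ → Bool) → X} (hFc : Continuous F) (hFi : Function.Injective F)
    {A : Set (ℕ → Bool)} (hA : IsClosed A)
    (hsplit : ∀ a ∈ A, ∀ m : ℕ, ∃ a' ∈ A, a' ≠ a ∧ ∀ i < m, a' i = a i) :
    Perfect (F '' A) := by
  constructor
  · exact (hA.isCompact.image hFc).isClosed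
  · intro y hy
    obtain ⟨a, haA, rfl⟩ := hy
    rw [accPt_iff_nhds]
    intro V hV
    choose a' ha'A ha'ne ha'ag using hsplit a haA
    have htt : Filter.Tendsto (fun m => F (a' m)) Filter.atTop (nhds (F a)) := by
      refine (hFc.tendsto a).comp ?_
      rw [tendsto_pi_nhds]
      intro i
      refine Filter.Tendsto.congr' ?_ tendsto_const_nhds
      filter_upwards [Filter.eventually_ge_atTop (i + 1)] with m hm
      exact (ha'ag m i (by omega)).symm
    obtain ⟨m, hm⟩ := (htt.eventually_mem hV).exists
    exact ⟨F (a' m), ⟨hm, mem_image_of_mem F (ha'A m)⟩, fun hEq => ha'ne m (hFi hEq)⟩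

end AuxStmt16

/-- Let `X` be an uncountable Polish space, `I` an ideal on `X` containing no nonempty
open set, `{U n}` a countable base of nonempty open sets, and `x ∈ X`.  Then `I` has
property (M'_x) iff there is a Borel function `f : X → X` such that for each `n` with
`x ∈ U n` the set `H_n(f)` contains a nonempty perfect set. -/
theorem stmt16 {X : Type*} [TopologicalSpace X] [PolishSpace X]
    [MeasurableSpace X] [BorelSpace X] [Uncountable X]
    (I : Set (Set X))
    (hsub : ∀ A B : Set X, A ⊆ B → B ∈ I → A ∈ I)
    (hun : ∀ A B : Set X, A ∈ I → B ∈ I → A ∪ B ∈ I)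
    (hopen : ∀ V : Set X, IsOpen V → V.Nonempty → V ∉ I)
    (U : ℕ → Set X) (hbasis : TopologicalSpace.IsTopologicalBasis (Set.range U))
    (hUne : ∀ n, (U n).Nonempty) (x : X) :
    MPrimeAt I x ↔
      ∃ f : X → X, Measurable f ∧
        ∀ n : ℕ, x ∈ U n → ∃ P : Set X, P ⊆ Hset I U f n ∧ Perfect P ∧ P.Nonempty := by
  classical
  have hpos : ∀ {A B : Set X}, A ∉ I → A ⊆ B → B ∉ I := fun hA hAB hB => hA (hsub _ _ hAB hB)
  have hsplitI : ∀ {A S : Set X}, A ∉ I → A ∩ S ∈ I → A \ S ∉ I := by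
    intro A S hA hAS hdiff
    refine hA (hsub _ _ (fun z hz => ?_) (hun _ _ hdiff hAS))
    by_cases h : z ∈ S
    · exact Or.inr ⟨hz, h⟩
    · exact Or.inl ⟨hz, h⟩
  have hUopen : ∀ n, IsOpen (U n) := fun n => hbasis.isOpen ⟨n, rfl⟩
  constructor
  · -- forward direction
    intro hM
    -- Cantor set machinery
    obtain ⟨F, -, hFc, hFi⟩ := isClosed_univ.exists_nat_bool_injection_of_not_countable
        (C := (Set.univ : Set X))
        (by
          rw [Set.countable_univ_iff]
          exact not_countable)
    set K : Set X := Set.range F with hKdef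
    have hKperf : Perfect K := by
      have := stmt16_cantor_image_perfect hFc hFi isClosed_univ (by
        intro a _ m
        refine ⟨Function.update a m (!(a m)), mem_univ _, ?_, ?_⟩
        · intro h
          have := congrFun h m
          rw [Function.update_self] at this
          simp at this
        · intro i hi
          exact Function.update_of_ne (by omega) _ _)
      simpa [Set.image_univ] using this
    have hKne : K.Nonempty := ⟨F (fun _ => false), Set.mem_range_self _⟩
    -- the halving map on Cantor space
    set d : (ℕ → Bool) → (ℕ → Bool) := fun a i => a (2 * i) with hddef
    have hdc : Continuous d := continuous_pi fun i => continuous_apply (2 * i)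
    have hQperf : ∀ b : ℕ → Bool, Perfect (F '' (d ⁻¹' {b})) := by
      intro b
      refine stmt16_cantor_image_perfect hFc hFi ((isClosed_singleton).preimage hdc) ?_
      intro a ha m
      refine ⟨Function.update a (2 * m + 1) (!(a (2 * m + 1))), ?_, ?_, ?_⟩
      · rw [Set.mem_preimage, Set.mem_singleton_iff] at ha ⊢
        rw [← ha]
        funext i
        show Function.update a (2 * m + 1) (!(a (2 * m + 1))) (2 * i) = a (2 * i)
        exact Function.update_of_ne (by omega) _ _
      · intro h
        have := congrFun h (2 * m + 1)
        rw [Function.update_self] at this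
        simp at this
      · intro i hi
        exact Function.update_of_ne (by omega) _ _
    have hQne : ∀ b : ℕ → Bool, (F '' (d ⁻¹' {b})).Nonempty := by
      intro b
      refine ⟨F (fun i => b (i / 2)), Set.mem_image_of_mem F ?_⟩
      rw [Set.mem_preimage, Set.mem_singleton_iff]
      funext j
      show b (2 * j / 2) = b j
      congr 1
      omega
    -- homeomorphism with K and the collapsing map σ
    have hbij : Function.Bijective (fun a => (⟨F a, Set.mem_range_self a⟩ : ↥K)) := by
      constructor
      · intro a b hab
        exact hFi (congrArg Subtype.val hab)
      · rintro ⟨z, a, rfl⟩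
        exact ⟨a, rfl⟩
    let Heq : (ℕ → Bool) ≃ ↥K := Equiv.ofBijective _ hbij
    have hHc : Continuous (Heq : (ℕ → Bool) → ↥K) :=
      Continuous.subtype_mk hFc _
    let H : (ℕ → Bool) ≃ₜ ↥K := Continuous.homeoOfEquivCompactToT2 hHc
    let σ : X → X := fun z => if h : z ∈ K then F (d (H.symm ⟨z, h⟩)) else F (fun _ => false)
    have hσm : Measurable σ :=
      stmt16_dite_measurable hKperf.closed.measurableSet
        (g := fun p : ↥K => F (d (H.symm p)))
        ((hFc.comp (hdc.comp H.symm.continuous)).measurable) (F (fun _ => false))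
    have hσval : ∀ (b : ℕ → Bool) (w : X), w ∈ F '' (d ⁻¹' {b}) → σ w = F b := by
      intro b w hw
      obtain ⟨a, hab, rfl⟩ := hw
      have hmem : F a ∈ K := Set.mem_range_self a
      have hsy : H.symm ⟨F a, hmem⟩ = a := by
        have h1 : (⟨F a, hmem⟩ : ↥K) = H a := rfl
        rw [h1, Homeomorph.symm_apply_apply]
      rw [Set.mem_preimage, Set.mem_singleton_iff] at hab
      show (if h : F a ∈ K then F (d (H.symm ⟨F a, h⟩)) else F (fun _ => false)) = F b
      rw [dif_pos hmem, hsy, hab]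
    -- main case split
    by_cases hA : ∃ W : Set X, IsOpen W ∧ x ∈ W ∧ ∃ g : ↥W → X, Measurable g ∧
        (∀ v : X, (Subtype.val '' (g ⁻¹' {v})) ∉ I) ∧
        (∀ W' : Set X, IsOpen W' → x ∈ W' → ∀ R : Set X, Perfect R → R.Nonempty →
          ∃ w ∈ R, (Subtype.val '' (g ⁻¹' {w})) ∩ W' ∉ I)
    · -- concentrated case: collapse the witness
      obtain ⟨W, hWo, hWx, g, hgm, hgfib, halpha⟩ := hA
      let gg : X → X := fun z => if h : z ∈ W then g ⟨z, h⟩ else x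
      have hggm : Measurable gg :=
        stmt16_dite_measurable hWo.measurableSet hgm x
      refine ⟨σ ∘ gg, hσm.comp hggm, ?_⟩
      intro n hxn
      refine ⟨K, ?_, hKperf, hKne⟩
      rintro y ⟨b, rfl⟩
      obtain ⟨w, hwQ, hwpos⟩ := halpha (U n ∩ W) ((hUopen n).inter hWo) ⟨hxn, hWx⟩
        (F '' (d ⁻¹' {b})) (hQperf b) (hQne b)
      show U n ∩ (σ ∘ gg) ⁻¹' {F b} ∉ I
      refine hpos hwpos ?_
      rintro z ⟨⟨u, hu, rfl⟩, hzU, hzW⟩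
      refine ⟨hzU, ?_⟩
      have hgu : gg (u : X) = w := by
        show (if h : (u : X) ∈ W then g ⟨(u : X), h⟩ else x) = w
        rw [dif_pos hzW]
        have huu : (⟨(u : X), hzW⟩ : ↥W) = u := Subtype.ext rfl
        rw [huu]
        exact hu
      show σ (gg (u : X)) ∈ ({F b} : Set X)
      rw [hgu]
      exact hσval b w hwQ
    · -- escaping case: build disjoint annular regions
      push_neg at hA
      have step : ∀ W : Set X, IsOpen W → x ∈ W →
          ∃ (g : X → X) (W' R : Set X), Measurable g ∧ IsOpen W' ∧ x ∈ W' ∧ W' ⊆ W ∧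
            Perfect R ∧ R.Nonempty ∧ ∀ w ∈ R, (g ⁻¹' {w}) ∩ (W \ W') ∉ I := by
        intro W hWo hWx
        obtain ⟨g0, hg0m, hg0fib⟩ := hM W hWo hWx
        obtain ⟨W'', hW''o, hW''x, R, hRperf, hRne, hRsmall⟩ := hA W hWo hWx g0 hg0m hg0fib
        refine ⟨fun z => if h : z ∈ W then g0 ⟨z, h⟩ else x, W'' ∩ W, R,
          stmt16_dite_measurable hWo.measurableSet hg0m x,
          hW''o.inter hWo, ⟨hW''x, hWx⟩, Set.inter_subset_right, hRperf, hRne, ?_⟩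
        intro w hw
        have hApos : (Subtype.val '' (g0 ⁻¹' {w})) ∉ I := hg0fib w
        have hsmall : (Subtype.val '' (g0 ⁻¹' {w})) ∩ (W'' ∩ W) ∈ I :=
          hsub ((Subtype.val '' (g0 ⁻¹' {w})) ∩ (W'' ∩ W)) ((Subtype.val '' (g0 ⁻¹' {w})) ∩ W'')
            (fun z hz => ⟨hz.1, hz.2.1⟩) (hRsmall w hw)
        refine hpos (hsplitI hApos hsmall) ?_
        rintro z ⟨⟨u, hu, rfl⟩, hz2⟩
        have hzW : (u : X) ∈ W := u.2
        constructor
        · rw [Set.mem_preimage, dif_pos hzW]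
          have : (⟨(u : X), hzW⟩ : ↥W) = u := Subtype.ext rfl
          rw [this]
          exact hu
        · exact ⟨hzW, hz2⟩
      choose G Wnext Rset hGm hWno hWnx hWnsub hRp hRnon hRpos using step
      obtain ⟨n₀, hn₀⟩ : ∃ n, x ∈ U n := by
        have hx : x ∈ ⋃₀ Set.range U := by rw [hbasis.sUnion_eq]; trivial
        obtain ⟨t, ⟨n, rfl⟩, hxt⟩ := hx
        exact ⟨n, hxt⟩
      set e : ℕ → ℕ := fun i => if x ∈ U i then i else n₀ with hedef
      have hxe : ∀ i, x ∈ U (e i) := by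
        intro i
        by_cases h : x ∈ U i <;> simp [hedef, h, hn₀]
      let T := {p : Set X // IsOpen p ∧ x ∈ p}
      let succ : ℕ → T → T := fun i p =>
        ⟨Wnext p.1 p.2.1 p.2.2 ∩ U (e (i + 1)),
          (hWno p.1 p.2.1 p.2.2).inter (hUopen (e (i + 1))),
          ⟨hWnx p.1 p.2.1 p.2.2, hxe (i + 1)⟩⟩
      let S : ℕ → T := fun i => Nat.rec (⟨U (e 0), hUopen (e 0), hxe 0⟩ : T) succ i
      let Wn : ℕ → Set X := fun i => (S i).1
      have hWo : ∀ i, IsOpen (Wn i) := fun i => (S i).2.1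
      have hWx : ∀ i, x ∈ Wn i := fun i => (S i).2.2
      have hWsucc : ∀ i, Wn (i + 1) = Wnext (Wn i) (hWo i) (hWx i) ∩ U (e (i + 1)) :=
        fun i => rfl
      have hW0 : Wn 0 = U (e 0) := rfl
      have hWmono : ∀ i, Wn (i + 1) ⊆ Wn i := by
        intro i z hz
        rw [hWsucc i] at hz
        exact hWnsub _ _ _ hz.1
      have hWle : ∀ i j, i ≤ j → Wn j ⊆ Wn i := by
        intro i j hij
        induction hij with
        | refl => exact subset_rfl
        | step h ih => exact (hWmono _).trans ih
      let g : ℕ → X → X := fun i => G (Wn i) (hWo i) (hWx i)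
      let R : ℕ → Set X := fun i => Rset (Wn i) (hWo i) (hWx i)
      let Reg : ℕ → Set X := fun i => Wn i \ Wn (i + 1)
      have hgm : ∀ i, Measurable (g i) := fun i => hGm _ _ _
      have hRperf : ∀ i, Perfect (R i) := fun i => hRp _ _ _
      have hRne : ∀ i, (R i).Nonempty := fun i => hRnon _ _ _
      have hposReg : ∀ i, ∀ w ∈ R i, ((g i) ⁻¹' {w}) ∩ Reg i ∉ I := by
        intro i w hw
        refine hpos (hRpos (Wn i) (hWo i) (hWx i) w hw) ?_
        rintro z ⟨hz1, hz2, hz3⟩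
        refine ⟨hz1, hz2, fun hcon => hz3 ?_⟩
        rw [hWsucc i] at hcon
        exact hcon.1
      have hRegU : ∀ {i j : ℕ} {z : X}, z ∈ Reg i → z ∈ Reg j → i = j := by
        intro i j z hi hj
        by_contra hne
        rcases Nat.lt_or_ge i j with h | h
        · exact hi.2 (hWle (i + 1) j h hj.1)
        · have hji : j < i := lt_of_le_of_ne h (Ne.symm hne)
          exact hj.2 (hWle (j + 1) i hji hi.1)
      let f : X → X := fun z => if h : ∃ i, z ∈ Reg i then g (Nat.find h) z else x
      have hfreg : ∀ i z, z ∈ Reg i → f z = g i z := by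
        intro i z hz
        have hex : ∃ j, z ∈ Reg j := ⟨i, hz⟩
        have hspec := Nat.find_spec hex
        have heq : Nat.find hex = i := hRegU hspec hz
        show (if h : ∃ i, z ∈ Reg i then g (Nat.find h) z else x) = g i z
        rw [dif_pos hex, heq]
      have hfout : ∀ z, ¬(∃ i, z ∈ Reg i) → f z = x := by
        intro z hz
        show (if h : ∃ i, z ∈ Reg i then g (Nat.find h) z else x) = x
        rw [dif_neg hz]
      have hRegMeas : ∀ i, MeasurableSet (Reg i) :=
        fun i => (hWo i).measurableSet.diff (hWo (i + 1)).measurableSet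
      have hfm : Measurable f := by
        intro B hB
        have hset : f ⁻¹' B =
            (⋃ i, Reg i ∩ (g i) ⁻¹' B) ∪
              ((⋃ i, Reg i)ᶜ ∩ (if x ∈ B then Set.univ else ∅)) := by
          ext z
          constructor
          · intro hz
            rw [Set.mem_preimage] at hz
            by_cases hzr : ∃ i, z ∈ Reg i
            · obtain ⟨i, hi⟩ := hzr
              left
              refine Set.mem_iUnion.mpr ⟨i, hi, ?_⟩
              rw [Set.mem_preimage, ← hfreg i z hi]
              exact hz
            · right
              refine ⟨by simpa using hzr, ?_⟩
              rw [hfout z hzr] at hz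
              rw [if_pos hz]
              trivial
          · intro hz
            rw [Set.mem_preimage]
            rcases hz with hz | hz
            · obtain ⟨i, hi, hiB⟩ := Set.mem_iUnion.mp hz
              rw [hfreg i z hi]
              exact hiB
            · obtain ⟨hz1, hz2⟩ := hz
              have hzr : ¬(∃ i, z ∈ Reg i) := by simpa using hz1
              rw [hfout z hzr]
              by_cases hxB : x ∈ B
              · exact hxB
              · rw [if_neg hxB] at hz2
                exact absurd hz2 (Set.notMem_empty z)
        rw [hset]
        refine MeasurableSet.union (MeasurableSet.iUnion fun i => ?_) (MeasurableSet.inter ?_ ?_)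
        · exact (hRegMeas i).inter (hgm i hB)
        · exact (MeasurableSet.iUnion fun i => hRegMeas i).compl
        · split
          · exact MeasurableSet.univ
          · exact MeasurableSet.empty
      refine ⟨f, hfm, ?_⟩
      intro n hxn
      refine ⟨R n, ?_, hRperf n, hRne n⟩
      intro w hw
      show U n ∩ f ⁻¹' {w} ∉ I
      refine hpos (hposReg n w hw) ?_
      rintro z ⟨hz1, hz2⟩
      constructor
      · have hWU : Wn n ⊆ U (e n) := by
          cases n with
          | zero => rw [hW0]
          | succ m =>
            rw [hWsucc m]
            exact Set.inter_subset_right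
        have hen : e n = n := by rw [hedef]; simp [hxn]
        rw [← hen]
        exact hWU hz2.1
      · rw [Set.mem_preimage, hfreg n z hz2]
        exact hz1
  · -- backward direction
    rintro ⟨f, hfm, hP⟩ U₀ hU₀o hxU₀
    obtain ⟨B, ⟨n, rfl⟩, hxB, hBsub⟩ := hbasis.exists_subset_of_mem_open hxU₀ hU₀o
    obtain ⟨P, hPsub, hPperf, hPne⟩ := hP n hxB
    haveI : PolishSpace ↥P := hPperf.closed.polishSpace
    haveI : Uncountable ↥P := by
      letI := TopologicalSpace.upgradeIsCompletelyMetrizable X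
      obtain ⟨F', hF'r, hF'c, hF'i⟩ := hPperf.exists_nat_bool_injection hPne
      have hinj : Function.Injective
          (fun a => (⟨F' a, hF'r (Set.mem_range_self a)⟩ : ↥P)) :=
        fun a b hab => hF'i (congrArg Subtype.val hab)
      haveI : Uncountable (ℕ → Bool) := not_countable_iff.mp stmt16_uncountable_cantor
      exact hinj.uncountable
    let E : X ≃ᵐ ↥P :=
      PolishSpace.measurableEquivOfNotCountable (not_countable (α := X)) (not_countable (α := ↥P))
    refine ⟨fun u => if h : f (u : X) ∈ P then ((E.symm ⟨f (u : X), h⟩ : X)) else x, ?_, ?_⟩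
    · have hs : MeasurableSet ((fun u : ↥U₀ => f (u : X)) ⁻¹' P) :=
        (hfm.comp measurable_subtype_coe) hPperf.closed.measurableSet
      exact stmt16_dite_measurable (s := (fun u : ↥U₀ => f (u : X)) ⁻¹' P) hs
        (g := fun p => ((E.symm ⟨f ((p : ↥U₀) : X), p.2⟩ : X)))
        ((MeasurableEquiv.measurable E.symm).comp
          (Measurable.subtype_mk
            ((hfm.comp measurable_subtype_coe).comp measurable_subtype_coe))) x
    · intro v
      have hyvP : ((E v : ↥P) : X) ∈ P := (E v).2
      have hy : ((E v : ↥P) : X) ∈ Hset I U f n := hPsub hyvP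
      intro hcon
      refine hy (hsub _ _ ?_ hcon)
      rintro z ⟨hz1, hz2⟩
      rw [Set.mem_preimage, Set.mem_singleton_iff] at hz2
      refine ⟨⟨z, hBsub hz1⟩, ?_, rfl⟩
      have hzP : f z ∈ P := by rw [hz2]; exact hyvP
      show (if h : f z ∈ P then ((E.symm ⟨f z, h⟩ : X)) else x) = v
      rw [dif_pos hzP]
      have h2 : (⟨f z, hzP⟩ : ↥P) = E v := Subtype.ext hz2
      rw [h2, MeasurableEquiv.symm_apply_apply]
end

section
/- The ideal I has property (M*) if and only if there exists a Borel measurable function f : X → X such that the intersection ⋂_{n∈ℕ} H_n(f) contains a nonempty perfect subset of X. -/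
open Set MeasureTheory

/-- Let `X` be an uncountable Polish space, `I` an ideal on `X` containing no nonempty
open set, and `{U n}` a countable base of nonempty open sets.  Then `I` has property
(M*) — there is a Borel `f : X → X` with `f⁻¹[{x}] ∩ V ∉ I` for every `x` and every
nonempty open `V` — iff there is a Borel function `f : X → X` such that `⋂ n, H_n(f)`
contains a nonempty perfect set. -/
theorem stmt18 {X : Type*} [TopologicalSpace X] [PolishSpace X]
    [MeasurableSpace X] [BorelSpace X] [Uncountable X]
    (I : Set (Set X))
    (hsub : ∀ A B : Set X, A ⊆ B → B ∈ I → A ∈ I)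
    (hun : ∀ A B : Set X, A ∈ I → B ∈ I → A ∪ B ∈ I)
    (hopen : ∀ V : Set X, IsOpen V → V.Nonempty → V ∉ I)
    (U : ℕ → Set X) (hbasis : TopologicalSpace.IsTopologicalBasis (Set.range U))
    (hUne : ∀ n, (U n).Nonempty) :
    (∃ f : X → X, Measurable f ∧
        ∀ (x : X) (V : Set X), IsOpen V → V.Nonempty → f ⁻¹' {x} ∩ V ∉ I) ↔
      ∃ f : X → X, Measurable f ∧
        ∃ P : Set X, P ⊆ (⋂ n, Hset I U f n) ∧ Perfect P ∧ P.Nonempty := by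
  constructor
  · rintro ⟨f, hf, hfib⟩
    obtain ⟨P, hPperf, hPne, -⟩ :=
      exists_perfect_nonempty_of_isClosed_of_not_countable (isClosed_univ (X := X))
        (by simpa using (Set.not_countable_univ (α := X)))
    refine ⟨f, hf, P, ?_, hPperf, hPne⟩
    intro y _
    refine Set.mem_iInter.2 fun n => ?_
    have := hfib y (U n) (hbasis.isOpen ⟨n, rfl⟩) (hUne n)
    simpa [Hset, Set.inter_comm] using this
  · rintro ⟨f, hf, P, hPsub, hPperf, hPne⟩
    letI := TopologicalSpace.upgradeIsCompletelyMetrizable X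
    obtain ⟨e, heP, hecont, heinj⟩ := hPperf.exists_nat_bool_injection hPne
    have hnc : ¬Countable X := fun h => not_countable (α := X) h
    let m : (ℕ → Bool) ≃ᵐ X :=
      (PolishSpace.measurableEquivNatBoolOfNotCountable hnc).symm
    haveI : PolishSpace (ℕ → Bool) := {}
    have he : MeasurableEmbedding e := hecont.measurableEmbedding heinj
    obtain ⟨φ, hφ, hcomp⟩ := he.exists_measurable_extend m.measurable (fun _ => ⟨m (fun _ => true)⟩)
    refine ⟨φ ∘ f, hφ.comp hf, ?_⟩
    intro x V hV hVne
    obtain ⟨v, hvV⟩ := hVne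
    obtain ⟨t, ⟨n, rfl⟩, hvt, htV⟩ := hbasis.exists_subset_of_mem_open hvV hV
    set y : X := e (m.symm x) with hy
    have hyP : y ∈ P := heP ⟨m.symm x, rfl⟩
    have hyH : U n ∩ f ⁻¹' {y} ∉ I := Set.mem_iInter.1 (hPsub hyP) n
    have hφy : φ y = x := by
      have := congrFun hcomp (m.symm x)
      simpa [hy, Function.comp] using this
    intro hmem
    apply hyH
    refine hsub _ _ ?_ hmem
    rintro z ⟨hzU, hzf⟩
    have hfz : f z = y := hzf
    exact ⟨by simp [Function.comp, hfz, hφy], htV hzU⟩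
end

section
/- Suppose that I is a σ-ideal, that f : X → X is a Borel measurable function with f⁻¹[{x}] ∉ I for all x ∈ X, and that each set H_n(f), n ∈ ℕ, is either countable or contains a nonempty perfect subset of X. Then property (M'_x) holds for some x ∈ X. -/
open Set MeasureTheory

/-- Property (M) is monotone with respect to the base set: if it holds relative to a
nonempty measurable set `A`, it holds relative to any superset `B`. -/
lemma mrel_mono {X : Type*} [TopologicalSpace X] [MeasurableSpace X]
    (I : Set (Set X)) (hsub : ∀ A B : Set X, A ⊆ B → B ∈ I → A ∈ I)
    {A B : Set X} (hAB : A ⊆ B) (hAm : MeasurableSet A) (hAne : A.Nonempty)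
    (h : MRel I A) : MRel I B := by
  classical
  obtain ⟨g, hgm, hgf⟩ := h
  obtain ⟨a₀, ha₀⟩ := hAne
  set G : X → X := fun z => if h : z ∈ A then g ⟨z, h⟩ else g ⟨a₀, ha₀⟩ with hG
  have hGm : Measurable G := by
    exact Measurable.dite hgm (measurable_const : Measurable fun _ : ↥Aᶜ => g ⟨a₀, ha₀⟩) hAm
  refine ⟨fun z => G z, hGm.comp measurable_subtype_coe, fun x hx => ?_⟩
  refine hgf x (hsub _ _ ?_ hx)
  rintro - ⟨⟨a, ha⟩, hga, rfl⟩
  simp only [mem_preimage, mem_singleton_iff] at hga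
  refine ⟨⟨a, hAB ha⟩, ?_, rfl⟩
  simp only [mem_preimage, mem_singleton_iff, hG, dif_pos ha, hga]

/-- Let `X` be an uncountable Polish space, `I` a σ-ideal on `X` containing no nonempty
open set, and `{U n}` a countable base of nonempty open sets.  If `f : X → X` is a
Borel function with all fibers outside `I`, and each `H_n(f)` is either countable or
contains a nonempty perfect set, then property (M'_x) holds for some `x ∈ X`. -/
theorem stmt19 {X : Type*} [TopologicalSpace X] [PolishSpace X]
    [MeasurableSpace X] [BorelSpace X] [Uncountable X]
    (I : Set (Set X))
    (hsub : ∀ A B : Set X, A ⊆ B → B ∈ I → A ∈ I)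
    (hcnt : ∀ g : ℕ → Set X, (∀ n, g n ∈ I) → (⋃ n, g n) ∈ I)
    (hopen : ∀ V : Set X, IsOpen V → V.Nonempty → V ∉ I)
    (U : ℕ → Set X) (hbasis : TopologicalSpace.IsTopologicalBasis (Set.range U))
    (hUne : ∀ n, (U n).Nonempty)
    (f : X → X) (hf : Measurable f) (hfib : ∀ x : X, f ⁻¹' {x} ∉ I)
    (hH : ∀ n : ℕ, (Hset I U f n).Countable ∨
      ∃ P : Set X, P ⊆ Hset I U f n ∧ Perfect P ∧ P.Nonempty) :
    ∃ x : X, MPrimeAt I x := by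
  classical
  by_contra hcon
  push_neg at hcon
  -- every point lies in a basic open set `U n` with `¬ MRel I (U n)`
  have key : ∀ x : X, ∃ n : ℕ, x ∈ U n ∧ ¬ MRel I (U n) := by
    intro x
    obtain ⟨V, hVo, hxV, hVn⟩ := by
      have := hcon x
      simp only [MPrimeAt, not_forall] at this
      exact this
    obtain ⟨v, hvB, hxv, hvV⟩ := hbasis.exists_subset_of_mem_open hxV hVo
    obtain ⟨n, rfl⟩ := hvB
    refine ⟨n, hxv, fun hM => ?_⟩
    exact hVn (mrel_mono I hsub hvV (hbasis.isOpen ⟨n, rfl⟩).measurableSet (hUne n) hM)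
  -- for such `n`, `Hset I U f n` is countable
  have hcount : ∀ n : ℕ, ¬ MRel I (U n) → (Hset I U f n).Countable := by
    intro n hn
    rcases hH n with h | ⟨P, hPH, hPperf, hPne⟩
    · exact h
    exfalso
    apply hn
    -- `P` is an uncountable Polish space, hence Borel isomorphic to `X`
    haveI : PolishSpace ↥P := hPperf.closed.polishSpace
    haveI : StandardBorelSpace ↥P := hPperf.closed.measurableSet.standardBorel
    have hPuncnt : ¬ Countable ↥P := by
      haveI : Uncountable (ℕ → Bool) := by
        rw [← not_countable_iff]
        intro hc
        haveI : Countable (Set ℕ) :=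
          Countable.of_equiv _ (Equiv.arrowCongr (Equiv.refl ℕ) Equiv.propEquivBool).symm
        obtain ⟨j, hj⟩ := Countable.exists_injective_nat (Set ℕ)
        exact Function.cantor_injective j hj
      letI := TopologicalSpace.upgradeIsCompletelyMetrizable X
      obtain ⟨j, hjr, -, hji⟩ := hPperf.exists_nat_bool_injection hPne
      intro hc
      have hj' : Function.Injective (fun a : ℕ → Bool => (⟨j a, hjr ⟨a, rfl⟩⟩ : ↥P)) := by
        intro a b hab
        exact hji (congrArg Subtype.val hab)
      exact (not_countable (α := ℕ → Bool)) (hj'.countable)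
    obtain ⟨p₀, hp₀⟩ := hPne
    let φ : ↥P ≃ᵐ X := PolishSpace.measurableEquivOfNotCountable hPuncnt (not_countable (α := X))
    set G : X → X := fun y => if h : y ∈ P then φ ⟨y, h⟩ else φ ⟨p₀, hp₀⟩ with hG
    have hGm : Measurable G :=
      Measurable.dite φ.measurable (measurable_const : Measurable fun _ : ↥Pᶜ => φ ⟨p₀, hp₀⟩)
        hPperf.closed.measurableSet
    refine ⟨fun z => G (f z), (hGm.comp hf).comp measurable_subtype_coe, fun x hx => ?_⟩
    have hy : (φ.symm x : X) ∈ Hset I U f n := hPH (φ.symm x).2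
    refine hy (hsub _ _ ?_ hx)
    rintro z ⟨hzU, hzf⟩
    simp only [mem_preimage, mem_singleton_iff] at hzf
    refine ⟨⟨z, hzU⟩, ?_, rfl⟩
    simp only [mem_preimage, mem_singleton_iff, hG]
    have hfz : f z ∈ P := hzf ▸ (φ.symm x).2
    rw [dif_pos hfz]
    have : (⟨f z, hfz⟩ : ↥P) = φ.symm x := Subtype.ext hzf
    rw [this, MeasurableEquiv.apply_symm_apply]
  -- pick a point outside the countable union of the relevant `Hset`s
  set A : Set X := ⋃ n ∈ {n : ℕ | ¬ MRel I (U n)}, Hset I U f n with hA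
  have hAcnt : A.Countable :=
    Set.Countable.biUnion (Set.to_countable _) (fun n hn => hcount n hn)
  have hex : ∃ y : X, y ∉ A := by
    by_contra h
    push_neg at h
    have : (univ : Set X).Countable := by
      rwa [Set.eq_univ_of_forall h] at hAcnt
    exact (not_countable (α := X)) (Set.countable_univ_iff.1 this)
  obtain ⟨y, hy⟩ := hex
  have hyH : ∀ n : ℕ, ¬ MRel I (U n) → U n ∩ f ⁻¹' {y} ∈ I := by
    intro n hn
    by_contra hc
    exact hy (Set.mem_biUnion hn hc)
  obtain ⟨x₀⟩ : Nonempty X := inferInstance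
  choose nx hnxU hnxM using key
  set g : ℕ → Set X := fun n =>
    if ¬ MRel I (U n) then U n ∩ f ⁻¹' {y} else U (nx x₀) ∩ f ⁻¹' {y} with hg
  have hgI : ∀ n, g n ∈ I := by
    intro n
    simp only [hg]
    split_ifs with h
    · exact hyH (nx x₀) (hnxM x₀)
    · exact hyH n h
  have hcover : f ⁻¹' {y} ⊆ ⋃ n, g n := by
    intro z hz
    refine mem_iUnion.2 ⟨nx z, ?_⟩
    simp only [hg, if_pos (hnxM z)]
    exact ⟨hnxU z, hz⟩
  exact hfib y (hsub _ _ hcover (hcnt g hgI))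
end
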